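/- Fix y ∈ ℝ, ε > 0, m ∈ ℝ and ν > 0. Then ∫ 2·max(0, |y − η| − ε) φ(η; m, ν²) dη = 2[ (y − ε − m) Φ(y − ε; m, ν²) + ν² φ(y − ε; m, ν²) + (m − y − ε)(1 − Φ(y + ε; m, ν²)) + ν² φ(y + ε; m, ν²) ]. -/

import Mathlib

open MeasureTheory Real Filter

/-- Gaussian density with mean `m` and variance `ν ^ 2`, evaluated at `x`:
`φ(x; m, ν²) = (2πν²)^{-1/2} exp(−(x−m)²/(2ν²))`. -/
noncomputable def gpdf (m ν x : ℝ) : ℝ :=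
  (Real.sqrt (2 * Real.pi * ν ^ 2))⁻¹ * Real.exp (-((x - m) ^ 2) / (2 * ν ^ 2))

/-- Gaussian cumulative distribution function with mean `m` and variance `ν ^ 2`:
`Φ(c; m, ν²) = ∫_{−∞}^{c} φ(η; m, ν²) dη`. -/
noncomputable def gcdf (m ν c : ℝ) : ℝ := ∫ x in Set.Iio c, gpdf m ν x

lemma gpdf_eq_gaussianPDFReal (m ν : ℝ) :
    gpdf m ν = ProbabilityTheory.gaussianPDFReal m ⟨ν ^ 2, sq_nonneg ν⟩ := rfl

lemma gpdf_nonneg (m ν x : ℝ) : 0 ≤ gpdf m ν x := by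
  rw [gpdf_eq_gaussianPDFReal]; exact ProbabilityTheory.gaussianPDFReal_nonneg _ _ _

lemma gpdf_continuous (m ν : ℝ) : Continuous (gpdf m ν) := by
  unfold gpdf
  exact continuous_const.mul (Real.continuous_exp.comp (by fun_prop))

lemma integrable_gpdf (m ν : ℝ) : Integrable (gpdf m ν) := by
  rw [gpdf_eq_gaussianPDFReal]; exact ProbabilityTheory.integrable_gaussianPDFReal _ _

lemma integral_gpdf (m ν : ℝ) (hν : 0 < ν) : ∫ x, gpdf m ν x = 1 := by
  rw [gpdf_eq_gaussianPDFReal]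
  refine ProbabilityTheory.integral_gaussianPDFReal_eq_one m ?_
  intro h
  exact (pow_ne_zero 2 hν.ne') (congrArg NNReal.toReal h)

lemma integrable_sub_mul_gpdf (m ν : ℝ) (hν : 0 < ν) :
    Integrable (fun x => (x - m) * gpdf m ν x) := by
  have hb : 0 < (2 * ν ^ 2)⁻¹ := by positivity
  have h1 := integrable_mul_exp_neg_mul_sq hb
  have h2 : Integrable (fun x => (x - m) * Real.exp (-(2 * ν ^ 2)⁻¹ * (x - m) ^ 2)) :=
    ((measurePreserving_sub_right volume m).integrable_comp h1.aestronglyMeasurable).mpr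
      (by simpa using h1)
  have h3 := h2.const_mul (Real.sqrt (2 * Real.pi * ν ^ 2))⁻¹
  refine h3.congr (Eventually.of_forall fun x => ?_)
  simp only [gpdf]
  rw [show -((x - m) ^ 2) / (2 * ν ^ 2) = -(2 * ν ^ 2)⁻¹ * (x - m) ^ 2 by field_simp]
  ring

lemma hasDerivAt_neg_sq_mul_gpdf (m ν x : ℝ) (hν : 0 < ν) :
    HasDerivAt (fun t => -ν ^ 2 * gpdf m ν t) ((x - m) * gpdf m ν x) x := by
  have hu : HasDerivAt (fun t : ℝ => -((t - m) ^ 2) / (2 * ν ^ 2))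
      (-(x - m) / ν ^ 2) x := by
    have h1 : HasDerivAt (fun t : ℝ => t - m) 1 x := (hasDerivAt_id x).sub_const m
    have h2 := (h1.pow 2).neg.div_const (2 * ν ^ 2)
    refine h2.congr_deriv ?_
    field_simp
    ring
  have he := hu.exp
  have := (he.const_mul ((Real.sqrt (2 * Real.pi * ν ^ 2))⁻¹)).const_mul (-ν ^ 2)
  refine this.congr_deriv ?_
  simp only [gpdf]
  field_simp

lemma tendsto_gpdf_aux (m ν : ℝ) (hν : 0 < ν) {l : Filter ℝ}
    (h : Tendsto (fun x => (x - m) ^ 2) l atTop) : Tendsto (gpdf m ν) l (nhds 0) := by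
  have h1 : Tendsto (fun x : ℝ => -((x - m) ^ 2) / (2 * ν ^ 2)) l atBot := by
    have := h.atTop_mul_const_of_neg (show -(2 * ν ^ 2)⁻¹ < 0 by simp; positivity)
    refine this.congr fun x => ?_
    field_simp
  have h2 := Real.tendsto_exp_atBot.comp h1
  have h3 := h2.const_mul ((Real.sqrt (2 * Real.pi * ν ^ 2))⁻¹)
  unfold gpdf
  simpa [Function.comp_def] using h3

lemma tendsto_gpdf_atTop (m ν : ℝ) (hν : 0 < ν) : Tendsto (gpdf m ν) atTop (nhds 0) := by
  refine tendsto_gpdf_aux m ν hν ?_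
  have := (tendsto_pow_atTop two_ne_zero).comp (tendsto_atTop_add_const_right atTop (-m) tendsto_id)
  simpa [Function.comp_def, sub_eq_add_neg] using this

lemma tendsto_gpdf_atBot (m ν : ℝ) (hν : 0 < ν) : Tendsto (gpdf m ν) atBot (nhds 0) := by
  refine tendsto_gpdf_aux m ν hν ?_
  have habs : Tendsto (fun x : ℝ => |x - m|) atBot atTop :=
    tendsto_abs_atBot_atTop.comp (tendsto_atBot_add_const_right atBot (-m) tendsto_id)
  have := (tendsto_pow_atTop two_ne_zero).comp habs
  simpa [Function.comp_def, sq_abs] using this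

lemma integrable_bound (m ν c : ℝ) (hν : 0 < ν) :
    Integrable (fun η => (|c - m| + |η - m|) * gpdf m ν η) := by
  have h1 := (integrable_gpdf m ν).const_mul |c - m|
  have h2 := (integrable_sub_mul_gpdf m ν hν).abs
  refine (h1.add h2).congr (Eventually.of_forall fun x => ?_)
  simp only [Pi.add_apply]
  rw [abs_mul, abs_of_nonneg (gpdf_nonneg m ν x)]
  ring

lemma abs_max_zero_le (t : ℝ) : |max 0 t| ≤ |t| := by
  rw [abs_of_nonneg (le_max_left 0 t)]
  exact max_le (abs_nonneg t) (le_abs_self t)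

lemma integrable_max_left (m ν c : ℝ) (hν : 0 < ν) :
    Integrable (fun η => max 0 (c - η) * gpdf m ν η) := by
  refine (integrable_bound m ν c hν).mono'
    (((continuous_const.max (continuous_const.sub continuous_id)).mul
      (gpdf_continuous m ν)).aestronglyMeasurable)
    (Eventually.of_forall fun x => ?_)
  rw [Real.norm_eq_abs, abs_mul, abs_of_nonneg (gpdf_nonneg m ν x)]
  refine mul_le_mul_of_nonneg_right ?_ (gpdf_nonneg m ν x)
  refine (abs_max_zero_le _).trans ?_
  calc |c - x| = |(c - m) - (x - m)| := by ring_nf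
    _ ≤ |c - m| + |x - m| := abs_sub _ _

lemma integrable_max_right (m ν c : ℝ) (hν : 0 < ν) :
    Integrable (fun η => max 0 (η - c) * gpdf m ν η) := by
  refine (integrable_bound m ν c hν).mono'
    (((continuous_const.max (continuous_id.sub continuous_const)).mul
      (gpdf_continuous m ν)).aestronglyMeasurable)
    (Eventually.of_forall fun x => ?_)
  rw [Real.norm_eq_abs, abs_mul, abs_of_nonneg (gpdf_nonneg m ν x)]
  refine mul_le_mul_of_nonneg_right ?_ (gpdf_nonneg m ν x)
  refine (abs_max_zero_le _).trans ?_
  calc |x - c| = |(c - m) - (x - m)| := by rw [abs_sub_comm]; ring_nf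
    _ ≤ |c - m| + |x - m| := abs_sub _ _

lemma integral_Iio_sub_mul_gpdf (m ν c : ℝ) (hν : 0 < ν) :
    ∫ x in Set.Iio c, (x - m) * gpdf m ν x = -ν ^ 2 * gpdf m ν c := by
  rw [← integral_Iic_eq_integral_Iio]
  have h := integral_Iic_of_hasDerivAt_of_tendsto' (a := c)
    (f := fun t => -ν ^ 2 * gpdf m ν t) (f' := fun x => (x - m) * gpdf m ν x)
    (fun x _ => hasDerivAt_neg_sq_mul_gpdf m ν x hν)
    (integrable_sub_mul_gpdf m ν hν).integrableOn
    (by simpa using (tendsto_gpdf_atBot m ν hν).const_mul (-ν ^ 2))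
  rw [h]; ring

lemma integral_Ioi_sub_mul_gpdf (m ν c : ℝ) (hν : 0 < ν) :
    ∫ x in Set.Ioi c, (x - m) * gpdf m ν x = ν ^ 2 * gpdf m ν c := by
  have h := integral_Ioi_of_hasDerivAt_of_tendsto' (a := c)
    (f := fun t => -ν ^ 2 * gpdf m ν t) (f' := fun x => (x - m) * gpdf m ν x)
    (fun x _ => hasDerivAt_neg_sq_mul_gpdf m ν x hν)
    (integrable_sub_mul_gpdf m ν hν).integrableOn
    (by simpa using (tendsto_gpdf_atTop m ν hν).const_mul (-ν ^ 2))
  rw [h]; ring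

lemma integral_Ioi_gpdf (m ν c : ℝ) (hν : 0 < ν) :
    ∫ x in Set.Ioi c, gpdf m ν x = 1 - gcdf m ν c := by
  have h := integral_add_compl (measurableSet_Iio (a := c)) (integrable_gpdf m ν)
  rw [Set.compl_Iio, integral_Ici_eq_integral_Ioi] at h
  rw [integral_gpdf m ν hν] at h
  rw [gcdf]
  linarith [h]

lemma integral_max_left (m ν c : ℝ) (hν : 0 < ν) :
    ∫ η, max 0 (c - η) * gpdf m ν η
      = (c - m) * gcdf m ν c + ν ^ 2 * gpdf m ν c := by
  have hsplit := integral_add_compl (measurableSet_Iio (a := c))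
    (integrable_max_left m ν c hν)
  rw [Set.compl_Iio] at hsplit
  have hzero : ∫ η in Set.Ici c, max 0 (c - η) * gpdf m ν η = 0 := by
    refine setIntegral_eq_zero_of_forall_eq_zero fun x hx => ?_
    rw [max_eq_left (by simp only [Set.mem_Ici] at hx; linarith), zero_mul]
  have hcongr : ∫ η in Set.Iio c, max 0 (c - η) * gpdf m ν η
      = ∫ η in Set.Iio c, ((c - m) * gpdf m ν η - (η - m) * gpdf m ν η) := by
    refine setIntegral_congr_fun measurableSet_Iio fun x hx => ?_
    simp only [Set.mem_Iio] at hx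
    rw [max_eq_right (by linarith)]
    ring
  rw [← hsplit, hzero, add_zero, hcongr,
    integral_sub ((integrable_gpdf m ν).const_mul _).integrableOn
      (integrable_sub_mul_gpdf m ν hν).integrableOn,
    integral_const_mul, integral_Iio_sub_mul_gpdf m ν c hν]
  rw [gcdf]
  ring

lemma integral_max_right (m ν c : ℝ) (hν : 0 < ν) :
    ∫ η, max 0 (η - c) * gpdf m ν η
      = (m - c) * (1 - gcdf m ν c) + ν ^ 2 * gpdf m ν c := by
  have hsplit := integral_add_compl (measurableSet_Ioi (a := c))
    (integrable_max_right m ν c hν)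
  rw [Set.compl_Ioi] at hsplit
  have hzero : ∫ η in Set.Iic c, max 0 (η - c) * gpdf m ν η = 0 := by
    refine setIntegral_eq_zero_of_forall_eq_zero fun x hx => ?_
    rw [max_eq_left (by simp only [Set.mem_Iic] at hx; linarith), zero_mul]
  have hcongr : ∫ η in Set.Ioi c, max 0 (η - c) * gpdf m ν η
      = ∫ η in Set.Ioi c, ((η - m) * gpdf m ν η - (c - m) * gpdf m ν η) := by
    refine setIntegral_congr_fun measurableSet_Ioi fun x hx => ?_
    simp only [Set.mem_Ioi] at hx
    rw [max_eq_right (by linarith)]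
    ring
  rw [← hsplit, hzero, add_zero, hcongr,
    integral_sub (integrable_sub_mul_gpdf m ν hν).integrableOn
      ((integrable_gpdf m ν).const_mul _).integrableOn,
    integral_const_mul, integral_Ioi_sub_mul_gpdf m ν c hν,
    integral_Ioi_gpdf m ν c hν]
  ring

theorem svr_Psi0 (y ε m ν : ℝ) (hε : 0 < ε) (hν : 0 < ν) :
    ∫ η, 2 * max 0 (|y - η| - ε) * gpdf m ν η
      = 2 * ((y - ε - m) * gcdf m ν (y - ε) + ν ^ 2 * gpdf m ν (y - ε)
          + (m - y - ε) * (1 - gcdf m ν (y + ε)) + ν ^ 2 * gpdf m ν (y + ε)) := by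
  have hpt : ∀ η : ℝ, 2 * max 0 (|y - η| - ε) * gpdf m ν η
      = 2 * (max 0 ((y - ε) - η) * gpdf m ν η) + 2 * (max 0 (η - (y + ε)) * gpdf m ν η) := by
    intro η
    have key : max 0 (|y - η| - ε) = max 0 ((y - ε) - η) + max 0 (η - (y + ε)) := by
      rcases le_total η y with h | h
      · rw [abs_of_nonneg (by linarith)]
        rw [show max 0 (η - (y + ε)) = 0 from max_eq_left (by linarith)]
        rw [show y - η - ε = (y - ε) - η by ring, add_zero]
      · rw [abs_of_nonpos (by linarith)]
        rw [show max 0 ((y - ε) - η) = 0 from max_eq_left (by linarith)]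
        rw [show -(y - η) - ε = η - (y + ε) by ring, zero_add]
    rw [key]; ring
  rw [show (fun η => 2 * max 0 (|y - η| - ε) * gpdf m ν η)
      = fun η => 2 * (max 0 ((y - ε) - η) * gpdf m ν η)
        + 2 * (max 0 (η - (y + ε)) * gpdf m ν η) from funext hpt]
  rw [integral_add ((integrable_max_left m ν (y - ε) hν).const_mul 2)
    ((integrable_max_right m ν (y + ε) hν).const_mul 2),
    integral_const_mul, integral_const_mul,
    integral_max_left m ν (y - ε) hν, integral_max_right m ν (y + ε) hν]
  ring
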